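/- Let a, e, Λ′, Q ∈ ℝ, r > 0, and σ ∈ {+1, −1}. Set Υ_Λ := a²Q(Q + r⁴Λ′) + r²(−2e²Q − (e²+Q)r² + 3Qr + r³ − r⁶Λ′) and assume Υ_Λ ≥ 0 and Γ_σ := 2e²r² + r³(r−3) − a²r⁴Λ′ − 2a(aQ − σ√Υ_Λ) > 0. Define E_σ := (r²e² + r³(r−2) − Λ′r⁴(r²+a²) − a(aQ − σ√Υ_Λ))/(r²√Γ_σ) and L_σ := −((r²+a²)(aQ − σ√Υ_Λ) + 2ar³ + ar⁴Λ′(r²+a²) − ae²r²)/(r²√Γ_σ). Then, with E = E_σ and L = L_σ, the radial potential R satisfies R(r) = 0 and dR/dr(r) = 0; i.e., (E_σ, L_σ) are the constants of motion of a timelike spherical orbit of radius r and Carter constant Q in the Kerr–Newman–(anti) de Sitter spacetime. -/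

import Mathlib

/-- Timelike spherical orbits in Kerr–Newman–(anti) de Sitter spacetime
(units G=c=M=1, Λ' = Λ/3).  With `E_σ, L_σ` defined from the radius `r`, Carter
constant `Q`, spin `a`, charge `e` and `Λ'`, the radial potential
`R(x) = [(x²+a²)E − aL]² − Δ_r(x)(x² + Q + (L−aE)²)` satisfies `R(r)=0` and `R'(r)=0`. -/
theorem stmt_3 (a e Λ' Q r σ Υ Γ E L : ℝ) (hr : 0 < r) (hσ : σ = 1 ∨ σ = -1)
    (hΥ : Υ = a ^ 2 * Q * (Q + r ^ 4 * Λ') +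
            r ^ 2 * (-2 * e ^ 2 * Q - (e ^ 2 + Q) * r ^ 2 + 3 * Q * r + r ^ 3 - r ^ 6 * Λ'))
    (hΥ0 : 0 ≤ Υ)
    (hΓ : Γ = 2 * e ^ 2 * r ^ 2 + r ^ 3 * (r - 3) - a ^ 2 * r ^ 4 * Λ'
            - 2 * a * (a * Q - σ * Real.sqrt Υ))
    (hΓ0 : 0 < Γ)
    (hE : E = (r ^ 2 * e ^ 2 + r ^ 3 * (r - 2) - Λ' * r ^ 4 * (r ^ 2 + a ^ 2)
              - a * (a * Q - σ * Real.sqrt Υ)) / (r ^ 2 * Real.sqrt Γ))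
    (hL : L = -((r ^ 2 + a ^ 2) * (a * Q - σ * Real.sqrt Υ) + 2 * a * r ^ 3
              + a * r ^ 4 * Λ' * (r ^ 2 + a ^ 2) - a * e ^ 2 * r ^ 2) / (r ^ 2 * Real.sqrt Γ)) :
    (fun x : ℝ => ((x ^ 2 + a ^ 2) * E - a * L) ^ 2 -
        ((1 - Λ' * x ^ 2) * (x ^ 2 + a ^ 2) - 2 * x + e ^ 2) * (x ^ 2 + Q + (L - a * E) ^ 2)) r
      = 0
    ∧ deriv (fun x : ℝ => ((x ^ 2 + a ^ 2) * E - a * L) ^ 2 -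
        ((1 - Λ' * x ^ 2) * (x ^ 2 + a ^ 2) - 2 * x + e ^ 2) * (x ^ 2 + Q + (L - a * E) ^ 2)) r
      = 0 := by
  set u := Real.sqrt Υ with hu
  set g := Real.sqrt Γ with hg
  have hr0 : r ≠ 0 := ne_of_gt hr
  have hg0 : g ≠ 0 := ne_of_gt (Real.sqrt_pos.mpr hΓ0)
  have hu2 : u ^ 2 = Υ := Real.sq_sqrt hΥ0
  have hg2 : g ^ 2 = Γ := Real.sq_sqrt hΓ0.le
  have hσ2 : σ ^ 2 = 1 := by rcases hσ with h | h <;> rw [h] <;> norm_num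
  have hA : (r^2+a^2)*E - a*L = r^2*((1-Λ'*r^2)*(r^2+a^2)-2*r+e^2) / g := by
    rw [hE, hL]; field_simp; ring
  have hB : L - a*E = (σ*u - a*Q - a*r^2)/g := by
    rw [hE, hL]; field_simp; ring
  constructor
  · show ((r ^ 2 + a ^ 2) * E - a * L) ^ 2 -
        ((1 - Λ' * r ^ 2) * (r ^ 2 + a ^ 2) - 2 * r + e ^ 2) * (r ^ 2 + Q + (L - a * E) ^ 2) = 0
    rw [hA, hB]
    field_simp
    linear_combination (-((1 - Λ' * r ^ 2) * (r ^ 2 + a ^ 2) - 2 * r + e ^ 2) * (r ^ 2 + Q)) * (hg2.trans hΓ) + (-((1 - Λ' * r ^ 2) * (r ^ 2 + a ^ 2) - 2 * r + e ^ 2) * σ ^ 2) * (hu2.trans hΥ) +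
      (-((1 - Λ' * r ^ 2) * (r ^ 2 + a ^ 2) - 2 * r + e ^ 2) * (a ^ 2 * Q * (Q + r ^ 4 * Λ') + r ^ 2 * (-2 * e ^ 2 * Q - (e ^ 2 + Q) * r ^ 2 + 3 * Q * r + r ^ 3 - r ^ 6 * Λ'))) * hσ2
  · have hx2 : HasDerivAt (fun x : ℝ => x ^ 2) (2 * r) r := by
      simpa using hasDerivAt_pow 2 r
    have h1 : HasDerivAt (fun x : ℝ => (x ^ 2 + a ^ 2) * E - a * L) (2 * r * E) r :=
      ((hx2.add_const (a ^ 2)).mul_const E).sub_const (a * L)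
    have hA2 : HasDerivAt (fun x : ℝ => ((x ^ 2 + a ^ 2) * E - a * L) ^ 2)
        (2 * ((r ^ 2 + a ^ 2) * E - a * L) ^ 1 * (2 * r * E)) r := h1.pow 2
    have hΔ1 : HasDerivAt (fun x : ℝ => 1 - Λ' * x ^ 2) (-(Λ' * (2 * r))) r :=
      (hx2.const_mul Λ').const_sub 1
    have hΔ : HasDerivAt (fun x : ℝ => (1 - Λ' * x ^ 2) * (x ^ 2 + a ^ 2) - 2 * x + e ^ 2)
        ((-(Λ' * (2 * r))) * (r ^ 2 + a ^ 2) + (1 - Λ' * r ^ 2) * (2 * r) - 2 * 1 + 0) r := by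
      simpa using ((hΔ1.mul (hx2.add_const (a ^ 2))).sub ((hasDerivAt_id r).const_mul 2)).add_const (e ^ 2)
    have hC : HasDerivAt (fun x : ℝ => x ^ 2 + Q + (L - a * E) ^ 2) (2 * r + 0 + 0) r := by
      simpa using (hx2.add_const Q).add_const ((L - a * E) ^ 2)
    have hf : HasDerivAt (fun x : ℝ => ((x ^ 2 + a ^ 2) * E - a * L) ^ 2 -
        ((1 - Λ' * x ^ 2) * (x ^ 2 + a ^ 2) - 2 * x + e ^ 2) * (x ^ 2 + Q + (L - a * E) ^ 2))
        (2 * ((r ^ 2 + a ^ 2) * E - a * L) ^ 1 * (2 * r * E) -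
          (((-(Λ' * (2 * r))) * (r ^ 2 + a ^ 2) + (1 - Λ' * r ^ 2) * (2 * r) - 2 * 1 + 0) *
              (r ^ 2 + Q + (L - a * E) ^ 2) +
            ((1 - Λ' * r ^ 2) * (r ^ 2 + a ^ 2) - 2 * r + e ^ 2) * (2 * r + 0 + 0))) r :=
      hA2.sub (hΔ.mul hC)
    rw [hf.deriv]
    rw [hA, hB, hE]
    field_simp
    have key : 4 * r ^ 3 * ((1 - Λ' * r ^ 2) * (r ^ 2 + a ^ 2) - 2 * r + e ^ 2) * (r ^ 2 * e ^ 2 + r ^ 3 * (r - 2) - Λ' * r ^ 4 * (r ^ 2 + a ^ 2) - a * (a * Q - σ * u)) - r ^ 2 * (-(Λ' * (2 * r) * (r ^ 2 + a ^ 2)) + (1 - Λ' * r ^ 2) * (2 * r) - 2) * (σ * u - a * Q - a * r ^ 2) ^ 2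
        - g ^ 2 * r ^ 2 * ((-(Λ' * (2 * r) * (r ^ 2 + a ^ 2)) + (1 - Λ' * r ^ 2) * (2 * r) - 2) * (r ^ 2 + Q) + 2 * r * ((1 - Λ' * r ^ 2) * (r ^ 2 + a ^ 2) - 2 * r + e ^ 2)) = 0 := by
      linear_combination (-(r ^ 2 * ((-(Λ' * (2 * r) * (r ^ 2 + a ^ 2)) + (1 - Λ' * r ^ 2) * (2 * r) - 2) * (r ^ 2 + Q) + 2 * r * ((1 - Λ' * r ^ 2) * (r ^ 2 + a ^ 2) - 2 * r + e ^ 2)))) * (hg2.trans hΓ) +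
        (-(r ^ 2) * (-(Λ' * (2 * r) * (r ^ 2 + a ^ 2)) + (1 - Λ' * r ^ 2) * (2 * r) - 2) * σ ^ 2) * (hu2.trans hΥ) + (-(r ^ 2) * (-(Λ' * (2 * r) * (r ^ 2 + a ^ 2)) + (1 - Λ' * r ^ 2) * (2 * r) - 2) * (a ^ 2 * Q * (Q + r ^ 4 * Λ') + r ^ 2 * (-2 * e ^ 2 * Q - (e ^ 2 + Q) * r ^ 2 + 3 * Q * r + r ^ 3 - r ^ 6 * Λ'))) * hσ2
    exact mul_left_cancel₀ (pow_ne_zero 2 hr0) (by linear_combination key)
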